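/- Let H_W be the Iwahori–Hecke algebra of a finite Coxeter group W over ℤ[q^{±1/2}], with standard generators T_s satisfying (T_s − q^{1/2})(T_s + q^{−1/2}) = 0. Let τ^+ (resp. τ^−) be the ℤ[q^{±1/2}]-linear functional sending T_w (resp. T_w^{−1}) to 1 if w = e and 0 otherwise. Then for the full twist π = T_{w_0}^2 and any element β of the braid group image in H_W, τ^−(β) = τ^+(βπ). -/

import Mathlib

open LaurentPolynomial

set_option linter.unusedSectionVars false

namespace KalmanAux
open List
variable {I W : Type*} [Group W] [DecidableEq W] {M : CoxeterMatrix I} (cs : CoxeterSystem M W)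

local prefix:100 "s" => cs.simple
local prefix:100 "π" => cs.wordProd
local prefix:100 "ℓ" => cs.length
local prefix:100 "ris" => cs.rightInvSeq


variable {I W : Type*} [Group W] [DecidableEq W] {M : CoxeterMatrix I} (cs : CoxeterSystem M W)

local prefix:100 "s" => cs.simple
local prefix:100 "π" => cs.wordProd
local prefix:100 "ℓ" => cs.length
local prefix:100 "ris" => cs.rightInvSeq

noncomputable section

/-- The basic involution on `W × ZMod 2`. -/
def uFun (i : I) : W × ZMod 2 → W × ZMod 2 :=
  fun p => (s i * p.1 * s i, if p.1 = s i then p.2 + 1 else p.2)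

lemma uFun_invol (i : I) : Function.Involutive (uFun cs i) := by
  intro p
  unfold uFun
  have h1 : s i * (s i * p.1 * s i) * s i = p.1 := by
    simp [mul_assoc, cs.simple_mul_simple_cancel_left]
  have hc : (s i * p.1 * s i = s i) ↔ p.1 = s i := by
    constructor
    · intro h
      have := congrArg (fun x => s i * x * s i) h
      simpa [mul_assoc, cs.simple_mul_simple_cancel_left] using this
    · intro h; rw [h]; simp [cs.simple_mul_simple_self]
  simp only [h1, hc]
  split_ifs with h
  · have : (1 + 1 : ZMod 2) = 0 := by decide
    simp [add_assoc, this]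
  · simp

/-- The involution as a permutation. -/
def uPerm (i : I) : Equiv.Perm (W × ZMod 2) := (uFun_invol cs i).toPerm

lemma uPerm_apply (i : I) (p : W × ZMod 2) : uPerm cs i p = uFun cs i p := rfl

lemma wordPerm_spec (ω : List I) (t : W) (ε : ZMod 2) :
    ((ω.map (uPerm cs)).prod) (t, ε)
      = (π ω * t * (π ω)⁻¹, ε + (List.count t (ris ω) : ZMod 2)) := by
  induction ω generalizing ε with
  | nil => simp
  | cons i ω ih =>
    rw [List.map_cons, List.prod_cons, Equiv.Perm.mul_apply, ih]
    rw [uPerm_apply]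
    unfold uFun
    have hd : cs.rightInvSeq (i :: ω) = ((π ω)⁻¹ * (s i) * (π ω)) :: cs.rightInvSeq ω := rfl
    rw [hd, cs.wordProd_cons]
    rw [Prod.mk.injEq]
    have hiff : (π ω * t * (π ω)⁻¹ = s i) ↔ ((π ω)⁻¹ * s i * π ω == t) = true := by
      rw [beq_iff_eq]
      constructor
      · intro h; rw [← h]; group
      · intro h; rw [← h]; group
    constructor
    · simp [mul_assoc]
    · simp only [List.count_cons]
      by_cases h : π ω * t * (π ω)⁻¹ = s i
      · rw [if_pos h, if_pos (hiff.mp h)]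
        push_cast
        ring
      · rw [if_neg h, if_neg (fun hh => h (hiff.mpr hh))]
        push_cast
        ring

end

section dihedral
variable {G : Type*} [Group G] (x y : G)

lemma conj_pow_lemma (hx : x * x = 1) (hy : y * y = 1) (k : ℕ) :
    y * (x * y) ^ k = ((x * y) ^ k)⁻¹ * y := by
  have hxinv : x⁻¹ = x := inv_eq_of_mul_eq_one_right hx
  have hyinv : y⁻¹ = y := inv_eq_of_mul_eq_one_right hy
  have K1' : y * (x * y) = (x * y)⁻¹ * y := by
    rw [mul_inv_rev, hxinv, hyinv, ← mul_assoc]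
  induction k with
  | zero => simp
  | succ k ih =>
    rw [pow_succ, ← mul_assoc, ih, mul_assoc, K1', ← mul_assoc, ← mul_inv_rev, ← pow_succ',
      ← pow_succ]

lemma dihedral_head (hx : x * x = 1) (hy : y * y = 1) (n : ℕ) :
    ((if Even n then 1 else y) * (x * y) ^ (n / 2))⁻¹ * (if Even n then y else x)
      * ((if Even n then 1 else y) * (x * y) ^ (n / 2)) = ((x * y) ^ n)⁻¹ * y := by
  have hxinv : x⁻¹ = x := inv_eq_of_mul_eq_one_right hx
  have hyinv : y⁻¹ = y := inv_eq_of_mul_eq_one_right hy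
  by_cases hn : Even n
  · rw [if_pos hn, if_pos hn, one_mul]
    obtain ⟨r, hr⟩ := hn
    have h2 : n / 2 = r := by omega
    rw [h2]
    rw [mul_assoc, conj_pow_lemma x y hx hy r, ← mul_assoc, ← mul_inv_rev, ← pow_add]
    have : r + r = n := by omega
    rw [this]
  · rw [if_neg hn, if_neg hn]
    obtain ⟨r, hr⟩ := Nat.not_even_iff_odd.mp hn
    have h2 : n / 2 = r := by omega
    rw [h2]
    have hK3 : y * x * y = (x * y)⁻¹ * y := by
      rw [mul_inv_rev, hxinv, hyinv]
    calc (y * (x * y) ^ r)⁻¹ * x * (y * (x * y) ^ r)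
        = ((x * y) ^ r)⁻¹ * (y * x * (y * (x * y) ^ r)) := by
          rw [mul_inv_rev, hyinv]; simp only [mul_assoc]
      _ = ((x * y) ^ r)⁻¹ * ((y * x * y) * (x * y) ^ r) := by
          simp only [mul_assoc]
      _ = ((x * y) ^ r)⁻¹ * ((x * y)⁻¹ * (y * (x * y) ^ r)) := by
          rw [hK3]; simp only [mul_assoc]
      _ = ((x * y) ^ r)⁻¹ * ((x * y)⁻¹ * (((x * y) ^ r)⁻¹ * y)) := by
          rw [conj_pow_lemma x y hx hy r]
      _ = ((x * y) ^ n)⁻¹ * y := by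
          rw [← mul_assoc ((x*y))⁻¹, ← mul_inv_rev, ← pow_succ, ← mul_assoc, ← mul_inv_rev,
            ← pow_add]
          have : (x*y) ^ (r + 1 + r) = (x*y) ^ n := by rw [hr]; ring_nf
          rw [this]
end dihedral

variable {I W : Type*} [Group W] [DecidableEq W] {M : CoxeterMatrix I} (cs : CoxeterSystem M W)

local prefix:100 "s" => cs.simple
local prefix:100 "π" => cs.wordProd
local prefix:100 "ℓ" => cs.length
local prefix:100 "ris" => cs.rightInvSeq

lemma ris_alternatingWord (i j : I) (n : ℕ) :
    ris (CoxeterSystem.alternatingWord i j n)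
      = ((List.range n).reverse).map (fun k => ((s i * s j) ^ k)⁻¹ * s j) := by
  induction n with
  | zero => simp [CoxeterSystem.alternatingWord]
  | succ n ih =>
    rw [CoxeterSystem.alternatingWord_succ']
    have hd : cs.rightInvSeq ((if Even n then j else i) :: CoxeterSystem.alternatingWord i j n)
        = ((π (CoxeterSystem.alternatingWord i j n))⁻¹ * (s (if Even n then j else i))
            * (π (CoxeterSystem.alternatingWord i j n)))
          :: cs.rightInvSeq (CoxeterSystem.alternatingWord i j n) := rfl
    rw [hd, ih, List.range_succ, List.reverse_append]
    simp only [List.reverse_singleton, List.singleton_append, List.map_cons]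
    congr 1
    rw [cs.prod_alternatingWord_eq_mul_pow]
    have hs : s (if Even n then j else i) = if Even n then s j else s i := by
      split_ifs <;> rfl
    rw [hs]
    exact dihedral_head (s i) (s j) (cs.simple_mul_simple_self i)
      (cs.simple_mul_simple_self j) n

lemma count_ris_alternatingWord_even (i j : I) (t : W) :
    Even (List.count t (ris (CoxeterSystem.alternatingWord i j (2 * M i j)))) := by
  rw [ris_alternatingWord cs i j, List.map_reverse, List.count_reverse]
  have hsplit : List.range (2 * M i j) = List.range (M i j)
      ++ (List.range (M i j)).map (M i j + ·) := by
    rw [two_mul, List.range_add]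
  rw [hsplit, List.map_append, List.count_append, List.map_map]
  have hper : ((fun k => ((s i * s j) ^ k)⁻¹ * s j) ∘ (M i j + ·))
      = (fun k => ((s i * s j) ^ k)⁻¹ * s j) := by
    funext k
    simp only [Function.comp_apply]
    rw [pow_add, cs.simple_mul_simple_pow i j, one_mul]
  rw [hper]
  exact ⟨_, rfl⟩

lemma uPerm_liftable : M.IsLiftable (uPerm cs) := by
  intro i j
  have key : ∀ n : ℕ, (uPerm cs i * uPerm cs j) ^ n
      = ((CoxeterSystem.alternatingWord i j (2 * n)).map (uPerm cs)).prod := by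
    intro n
    induction n with
    | zero => simp [CoxeterSystem.alternatingWord]
    | succ n ih =>
      have h1 : 2 * (n + 1) = (2 * n + 1) + 1 := by ring
      rw [h1, CoxeterSystem.alternatingWord_succ', CoxeterSystem.alternatingWord_succ']
      have he1 : ¬ Even (2 * n + 1) := by simp [parity_simps]
      have he2 : Even (2 * n) := ⟨n, by ring⟩
      rw [if_neg he1, if_pos he2]
      rw [List.map_cons, List.map_cons, List.prod_cons, List.prod_cons, ← ih]
      rw [pow_succ']
      rw [mul_assoc]
  rw [key (M i j)]
  apply Equiv.ext
  rintro ⟨t, ε⟩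
  rw [wordPerm_spec, Equiv.Perm.one_apply]
  have hπ : π (CoxeterSystem.alternatingWord i j (2 * M i j)) = 1 := by
    rw [cs.prod_alternatingWord_eq_mul_pow]
    have : Even (2 * M i j) := ⟨M i j, by ring⟩
    rw [if_pos this, one_mul]
    have h2 : 2 * M i j / 2 = M i j := by omega
    rw [h2, cs.simple_mul_simple_pow]
  obtain ⟨c, hc⟩ := count_ris_alternatingWord_even cs i j t
  rw [hπ, hc]
  have h20 : (2 : ZMod 2) = 0 := by decide
  have hcc : ((c + c : ℕ) : ZMod 2) = 0 := by
    have : ((c + c : ℕ) : ZMod 2) = (c : ZMod 2) * 2 := by push_cast; ring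
    rw [this, h20, mul_zero]
  rw [hcc]
  simp


noncomputable def phi : W →* Equiv.Perm (W × ZMod 2) :=
  cs.lift ⟨uPerm cs, uPerm_liftable cs⟩

lemma phi_simple (i : I) : phi cs (s i) = uPerm cs i :=
  cs.lift_apply_simple (uPerm_liftable cs) i

lemma phi_wordProd (ω : List I) : phi cs (π ω) = ((ω.map (uPerm cs)).prod) := by
  induction ω with
  | nil => simp
  | cons i ω ih => rw [cs.wordProd_cons, map_mul, ih, List.map_cons, List.prod_cons, phi_simple]

noncomputable def cfun (w t : W) : ZMod 2 := (phi cs w (t, 0)).2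

lemma cfun_count (ω : List I) (t : W) :
    cfun cs (π ω) t = (List.count t (ris ω) : ZMod 2) := by
  unfold cfun
  rw [phi_wordProd, wordPerm_spec]
  simp

lemma cfun_one (t : W) : cfun cs 1 t = 0 := by
  unfold cfun
  rw [map_one, Equiv.Perm.one_apply]

lemma phi_apply (w t : W) (ε : ZMod 2) :
    phi cs w (t, ε) = (w * t * w⁻¹, ε + cfun cs w t) := by
  obtain ⟨ω, rfl⟩ := cs.wordProd_surjective w
  rw [phi_wordProd, wordPerm_spec, cfun_count]

lemma cfun_mul (x y t : W) :
    cfun cs (x * y) t = cfun cs y t + cfun cs x (y * t * y⁻¹) := by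
  show (phi cs (x * y) (t, 0)).2 = _
  rw [map_mul, Equiv.Perm.mul_apply, phi_apply cs y t 0,
    phi_apply cs x (y * t * y⁻¹) (0 + cfun cs y t)]
  simp

lemma cfun_simple (i : I) (t : W) : cfun cs (s i) t = if t = s i then 1 else 0 := by
  have h := cfun_count cs [i] t
  rw [cs.wordProd_singleton] at h
  rw [h, cs.rightInvSeq_singleton]
  simp only [List.count_singleton', beq_iff_eq]
  by_cases ht : t = s i
  · simp [ht]
  · simp only [if_neg (Ne.symm ht), if_neg ht]
    norm_num

lemma isRightInversion_of_cfun (w t : W) (h1 : cfun cs w t = 1) :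
    cs.IsRightInversion w t := by
  obtain ⟨ω, hlen, rfl⟩ := cs.exists_reduced_word w
  have hred : cs.IsReduced ω := by unfold CoxeterSystem.IsReduced; exact hlen
  rw [cfun_count] at h1
  have hne : List.count t (ris ω) ≠ 0 := by
    intro h0
    rw [h0] at h1
    exact absurd h1 (by decide)
  have hmem : t ∈ ris ω := by
    by_contra hh
    exact hne (List.count_eq_zero.mpr hh)
  exact cs.isRightInversion_of_mem_rightInvSeq hred hmem

lemma zmod2_flip : ∀ a b : ZMod 2, a + b = 0 → b = a := by decide
lemma zmod2_aa : ∀ a : ZMod 2, a + (1 + a) = 1 := by decide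
lemma zmod2_n1 : ∀ a : ZMod 2, ¬ a = 1 → a = 0 := by decide
lemma zmod2_cancel : ∀ a b : ZMod 2, 1 + a = 1 ↔ a = 0 := by decide

lemma cfun_refl_self (t : W) (ht : cs.IsReflection t) : cfun cs t t = 1 := by
  obtain ⟨u, i, rfl⟩ := ht
  set t := u * s i * u⁻¹ with hti
  have hA : cfun cs u⁻¹ t = cfun cs u (s i) := by
    apply zmod2_flip
    have h1 : cfun cs (u⁻¹ * u) (s i) = cfun cs u (s i) + cfun cs u⁻¹ (u * s i * u⁻¹) :=
      cfun_mul cs u⁻¹ u (s i)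
    rw [inv_mul_cancel, cfun_one] at h1
    rw [← hti] at h1
    exact h1.symm
  have h2 : cfun cs ((u * s i) * u⁻¹) t = cfun cs u⁻¹ t + cfun cs (u * s i) (u⁻¹ * t * u⁻¹⁻¹) :=
    cfun_mul cs (u * s i) u⁻¹ t
  have h3 : u⁻¹ * t * u⁻¹⁻¹ = s i := by
    rw [hti]; group
  have h4 : cfun cs (u * s i) (s i) = cfun cs (s i) (s i) + cfun cs u (s i * s i * (s i)⁻¹) :=
    cfun_mul cs u (s i) (s i)
  have h5 : s i * s i * (s i)⁻¹ = s i := by group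
  have h6 : cfun cs (s i) (s i) = 1 := by rw [cfun_simple, if_pos rfl]
  rw [h3] at h2
  rw [h5, h6] at h4
  have h7 : (u * s i) * u⁻¹ = t := by rw [hti]
  rw [h7, h4, hA] at h2
  rw [h2]
  exact zmod2_aa _

lemma cfun_eq_one_of_inversion (w t : W) (ht : cs.IsReflection t) (hlt : ℓ (w * t) < ℓ w) :
    cfun cs w t = 1 := by
  have hvt : (w * t) * t = w := by rw [mul_assoc, ht.mul_self, mul_one]
  have hv0 : cfun cs (w * t) t = 0 := by
    apply zmod2_n1
    intro h
    have h2 := (isRightInversion_of_cfun cs (w * t) t h).2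
    rw [hvt] at h2
    omega
  have h3 : cfun cs ((w * t) * t) t = cfun cs t t + cfun cs (w * t) (t * t * t⁻¹) :=
    cfun_mul cs (w * t) t t
  have h4 : t * t * t⁻¹ = t := by group
  rw [hvt, h4, hv0, cfun_refl_self cs t ht, add_zero] at h3
  exact h3

lemma inversion_iff_cfun (w t : W) (ht : cs.IsReflection t) :
    cs.IsRightInversion w t ↔ cfun cs w t = 1 :=
  ⟨fun h => cfun_eq_one_of_inversion cs w t ht h.2, isRightInversion_of_cfun cs w t⟩

section finite
open scoped Classical
variable [Fintype W]

lemma length_eq_card (w : W) :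
    ℓ w = (Finset.univ.filter (fun t => cs.IsRightInversion w t)).card := by
  obtain ⟨ω, hlen, rfl⟩ := cs.exists_reduced_word w
  have hred : cs.IsReduced ω := by unfold CoxeterSystem.IsReduced; exact hlen
  have hset : Finset.univ.filter (fun t => cs.IsRightInversion (π ω) t) = (ris ω).toFinset := by
    ext t
    simp only [Finset.mem_filter, Finset.mem_univ, true_and, List.mem_toFinset]
    constructor
    · intro h
      have h1 : cfun cs (π ω) t = 1 := (inversion_iff_cfun cs _ t h.1).mp h
      rw [cfun_count] at h1
      by_contra hh
      rw [List.count_eq_zero.mpr hh] at h1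
      exact absurd h1 (by decide)
    · exact cs.isRightInversion_of_mem_rightInvSeq hred
  rw [hset, List.toFinset_card_of_nodup (hred.nodup_rightInvSeq), cs.length_rightInvSeq]
  exact hlen

lemma w0_inversion (w₀ : W) (hmax : ∀ w : W, ℓ w ≤ ℓ w₀) (t : W) (ht : cs.IsReflection t) :
    cs.IsRightInversion w₀ t :=
  ⟨ht, lt_of_le_of_ne (hmax (w₀ * t)) (ht.length_mul_left_ne w₀)⟩

lemma length_add_length_inv_mul_w0 (w₀ : W) (hmax : ∀ w : W, ℓ w ≤ ℓ w₀) (u : W) :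
    ℓ u + ℓ (u⁻¹ * w₀) = ℓ w₀ := by
  have key : ∀ t : W, cs.IsReflection t →
      (cs.IsRightInversion (u⁻¹ * w₀) t ↔ ¬ cs.IsRightInversion u⁻¹ (w₀ * t * w₀⁻¹)) := by
    intro t ht
    rw [inversion_iff_cfun cs _ t ht, cfun_mul cs u⁻¹ w₀ t,
      (inversion_iff_cfun cs w₀ t ht).mp (w0_inversion cs w₀ hmax t ht),
      inversion_iff_cfun cs u⁻¹ _ (ht.conj w₀)]
    constructor
    · intro h hc
      rw [hc] at h
      exact absurd h (by decide)
    · intro h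
      rw [zmod2_n1 _ h]
      decide
  have hT : Finset.univ.filter (fun t => cs.IsRightInversion w₀ t)
      = Finset.univ.filter (fun t => cs.IsReflection t) := by
    ext t
    simp only [Finset.mem_filter, Finset.mem_univ, true_and]
    exact ⟨fun h => h.1, w0_inversion cs w₀ hmax t⟩
  have h1 : ℓ (u⁻¹ * w₀) = ((Finset.univ.filter (fun t => cs.IsReflection t)).filter
      (fun t => ¬ cs.IsRightInversion u⁻¹ (w₀ * t * w₀⁻¹))).card := by
    rw [length_eq_card]
    congr 1
    ext t
    simp only [Finset.mem_filter, Finset.mem_univ, true_and]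
    constructor
    · intro h
      exact ⟨h.1, (key t h.1).mp h⟩
    · rintro ⟨ht, hp⟩
      exact (key t ht).mpr hp
  have h2 : ℓ u = ((Finset.univ.filter (fun t => cs.IsReflection t)).filter
      (fun t => cs.IsRightInversion u⁻¹ (w₀ * t * w₀⁻¹))).card := by
    rw [← cs.length_inv u, length_eq_card]
    apply Finset.card_bij (fun r _ => w₀⁻¹ * r * w₀)
    · intro r hr
      simp only [Finset.mem_filter, Finset.mem_univ, true_and] at hr ⊢
      have hconj : cs.IsReflection (w₀⁻¹ * r * w₀) := by
        simpa using hr.1.conj w₀⁻¹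
      refine ⟨hconj, ?_⟩
      have hrw : w₀ * (w₀⁻¹ * r * w₀) * w₀⁻¹ = r := by group
      rw [hrw]
      exact hr
    · intro r1 hr1 r2 hr2 heq
      exact mul_left_cancel (mul_right_cancel heq)
    · intro t hts
      simp only [Finset.mem_filter, Finset.mem_univ, true_and] at hts
      refine ⟨w₀ * t * w₀⁻¹, ?_, by group⟩
      simp only [Finset.mem_filter, Finset.mem_univ, true_and]
      exact ⟨hts.2.1, hts.2.2⟩
  have h3 : ((Finset.univ.filter (fun t => cs.IsReflection t)).filter
        (fun t => cs.IsRightInversion u⁻¹ (w₀ * t * w₀⁻¹))).card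
      + ((Finset.univ.filter (fun t => cs.IsReflection t)).filter
        (fun t => ¬ cs.IsRightInversion u⁻¹ (w₀ * t * w₀⁻¹))).card
      = (Finset.univ.filter (fun t => cs.IsReflection t)).card :=
    Finset.card_filter_add_card_filter_not _
  have h4 : ℓ w₀ = (Finset.univ.filter (fun t => cs.IsReflection t)).card := by
    rw [length_eq_card, hT]
  rw [h1, h2, h4]
  exact h3

lemma w0_mul_self (w₀ : W) (hmax : ∀ w : W, ℓ w ≤ ℓ w₀) : w₀ * w₀ = 1 := by
  have h := length_add_length_inv_mul_w0 cs w₀ hmax w₀⁻¹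
  rw [cs.length_inv, inv_inv] at h
  have : ℓ (w₀ * w₀) = 0 := by omega
  exact cs.length_eq_zero_iff.mp this

end finite

section hecke
variable {H : Type*} [Ring H] [Algebra (LaurentPolynomial ℤ) H] [DecidableEq W] (Tb : W → Hˣ)

lemma quad' (hquad : ∀ s0 : W, cs.length s0 = 1 →
      ((Tb s0 : H) - algebraMap (LaurentPolynomial ℤ) H (T 1)) *
        ((Tb s0 : H) + algebraMap (LaurentPolynomial ℤ) H (T (-1))) = 0)
    (s0 : W) (hs : cs.length s0 = 1) :
    (Tb s0 : H) * Tb s0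
      = algebraMap (LaurentPolynomial ℤ) H (T 1 - T (-1)) * (Tb s0 : H) + 1 := by
  have h := hquad s0 hs
  set x : H := (Tb s0 : H)
  set A : H := algebraMap (LaurentPolynomial ℤ) H (T 1)
  set B : H := algebraMap (LaurentPolynomial ℤ) H (T (-1))
  have hAB : A * B = 1 := by
    rw [← map_mul, ← T_add]
    norm_num
  have hBx : B * x = x * B := Algebra.commutes _ _
  have hexp : x * x + x * B - (A * x + A * B) = 0 := by
    rw [← h]; noncomm_ring
  have h3 := sub_eq_zero.mp hexp
  have h2 : x * x = A * x + A * B - x * B := by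
    rw [← h3]; abel
  rw [h2, hAB, ← hBx, map_sub, sub_mul]
  abel

lemma Tmul_desc (hmul : ∀ w w' : W, cs.length (w * w') = cs.length w + cs.length w' → Tb (w * w') = Tb w * Tb w')
    (hquad : ∀ s0 : W, cs.length s0 = 1 →
      ((Tb s0 : H) - algebraMap (LaurentPolynomial ℤ) H (T 1)) *
        ((Tb s0 : H) + algebraMap (LaurentPolynomial ℤ) H (T (-1))) = 0)
    (x sr : W) (hs : cs.length sr = 1) (hss : sr * sr = 1) (hd : cs.length (x * sr) + 1 = cs.length x) :
    (Tb x : H) * Tb sr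
      = algebraMap (LaurentPolynomial ℤ) H (T 1 - T (-1)) * (Tb x : H) + (Tb (x * sr) : H) := by
  have hx : Tb x = Tb (x * sr) * Tb sr := by
    have h1 : cs.length ((x * sr) * sr) = cs.length (x * sr) + cs.length sr := by
      rw [mul_assoc, hss, mul_one, hs, hd]
    have h2 := hmul (x * sr) sr h1
    rw [mul_assoc, hss, mul_one] at h2
    exact h2
  calc (Tb x : H) * Tb sr
      = (Tb (x * sr) : H) * ((Tb sr : H) * Tb sr) := by
        rw [hx, Units.val_mul, mul_assoc]
    _ = (Tb (x * sr) : H) * (algebraMap (LaurentPolynomial ℤ) H (T 1 - T (-1)) * (Tb sr : H) + 1)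
        := by rw [quad' cs Tb hquad sr hs]
    _ = algebraMap (LaurentPolynomial ℤ) H (T 1 - T (-1)) * ((Tb (x * sr) : H) * Tb sr) + Tb (x * sr)
        := by rw [mul_add, mul_one, ← mul_assoc, ← Algebra.commutes, mul_assoc]
    _ = _ := by rw [← Units.val_mul, ← hx]

variable (b : Module.Basis W (LaurentPolynomial ℤ) H)

lemma tau_TT (hT1 : Tb 1 = 1)
    (hmul : ∀ w w' : W, cs.length (w * w') = cs.length w + cs.length w' → Tb (w * w') = Tb w * Tb w')
    (hquad : ∀ s0 : W, cs.length s0 = 1 →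
      ((Tb s0 : H) - algebraMap (LaurentPolynomial ℤ) H (T 1)) *
        ((Tb s0 : H) + algebraMap (LaurentPolynomial ℤ) H (T (-1))) = 0)
    (hb : ∀ w : W, b w = (Tb w : H)) :
    ∀ n : ℕ, ∀ y x : W, cs.length y ≤ n →
    b.repr ((Tb x : H) * Tb y) 1 = if x * y = 1 then 1 else 0 := by
  intro n
  induction n with
  | zero =>
    intro y x hy
    have hy1 : y = 1 := cs.length_eq_zero_iff.mp (Nat.le_zero.mp hy)
    subst hy1
    rw [hT1, Units.val_one, mul_one, ← hb x, b.repr_self, mul_one, Finsupp.single_apply]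
  | succ n ih =>
    intro y x hy
    by_cases hy1 : y = 1
    · subst hy1
      rw [hT1, Units.val_one, mul_one, ← hb x, b.repr_self, mul_one, Finsupp.single_apply]
    · obtain ⟨i, hi⟩ := cs.exists_leftDescent_of_ne_one hy1
      obtain ⟨y', hy'def⟩ : ∃ z, z = cs.simple i * y := ⟨_, rfl⟩
      have hyy : y = cs.simple i * y' := by
        rw [hy'def, cs.simple_mul_simple_cancel_left]
      have hly : cs.length y' + 1 = cs.length y := by
        rcases cs.length_simple_mul y i with h | h
        · exfalso; unfold CoxeterSystem.IsLeftDescent at hi; omega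
        · rw [← hy'def] at h; exact h
      have hly' : cs.length y' ≤ n := by omega
      have hTy : Tb y = Tb (cs.simple i) * Tb y' := by
        have h1 : cs.length (cs.simple i * y') = cs.length (cs.simple i) + cs.length y' := by
          rw [← hyy, cs.length_simple, ← hly]; ring
        have h2 := hmul (cs.simple i) y' h1
        rw [← hyy] at h2
        exact h2
      have hss : cs.simple i * cs.simple i = 1 := cs.simple_mul_simple_self i
      rcases cs.length_mul_simple x i with hA | hB
      · have hTx : Tb (x * cs.simple i) = Tb x * Tb (cs.simple i) :=
          hmul x (cs.simple i) (by rw [hA, cs.length_simple])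
        have hcalc : (Tb x : H) * Tb y = (Tb (x * cs.simple i) : H) * Tb y' := by
          rw [hTy, hTx, Units.val_mul, Units.val_mul, mul_assoc]
        rw [hcalc, ih y' (x * cs.simple i) hly']
        have hcond : x * cs.simple i * y' = x * y := by rw [mul_assoc, ← hyy]
        rw [hcond]
      · have hdesc := Tmul_desc cs Tb hmul hquad x (cs.simple i) (cs.length_simple i) hss hB
        have hcalc : (Tb x : H) * Tb y
            = algebraMap (LaurentPolynomial ℤ) H (T 1 - T (-1)) * ((Tb x : H) * Tb y')
              + (Tb (x * cs.simple i) : H) * Tb y' := by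
          rw [hTy, Units.val_mul, ← mul_assoc, hdesc, add_mul, mul_assoc]
        rw [hcalc, map_add, Finsupp.add_apply, ← Algebra.smul_def, map_smul,
          Finsupp.smul_apply, smul_eq_mul, ih y' x hly', ih y' (x * cs.simple i) hly']
        have hne : ¬ (x * y' = 1) := by
          intro hone
          have hxinv : x = y'⁻¹ := eq_inv_of_mul_eq_one_left hone
          have hxsi : x * cs.simple i = y⁻¹ := by
            rw [hxinv, hyy, mul_inv_rev, cs.inv_simple]
          have hlx : cs.length x = cs.length y' := by rw [hxinv, cs.length_inv]
          have hlxsi : cs.length (x * cs.simple i) = cs.length y := by rw [hxsi, cs.length_inv]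
          omega
        rw [if_neg hne, mul_zero, zero_add]
        have hcond : x * cs.simple i * y' = x * y := by rw [mul_assoc, ← hyy]
        rw [hcond]

lemma key_basis (hmul : ∀ w w' : W, cs.length (w * w') = cs.length w + cs.length w' → Tb (w * w') = Tb w * Tb w')
    (hb : ∀ w : W, b w = (Tb w : H))
    (tau : ∀ y x : W, b.repr ((Tb x : H) * Tb y) 1 = if x * y = 1 then 1 else 0)
    (w₀ : W) (hlen : ∀ u : W, cs.length u + cs.length (u⁻¹ * w₀) = cs.length w₀) (hw0 : w₀ * w₀ = 1) (w : W) :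
    b.repr ((((Tb w)⁻¹ : Hˣ) : H) * ((Tb w₀ : H) * Tb w₀)) 1 = if w = 1 then 1 else 0 := by
  have hmul0 : Tb w₀ = Tb w * Tb (w⁻¹ * w₀) := by
    have h1 : cs.length (w * (w⁻¹ * w₀)) = cs.length w + cs.length (w⁻¹ * w₀) := by
      rw [mul_inv_cancel_left]
      exact (hlen w).symm
    have h2 := hmul w (w⁻¹ * w₀) h1
    rw [mul_inv_cancel_left] at h2
    exact h2
  have hred : (((Tb w)⁻¹ : Hˣ) : H) * ((Tb w₀ : H) * Tb w₀)
      = (Tb (w⁻¹ * w₀) : H) * Tb w₀ := by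
    nth_rw 1 [hmul0]
    rw [Units.val_mul, ← mul_assoc, ← mul_assoc, Units.inv_mul, one_mul]
  rw [hred, tau w₀ (w⁻¹ * w₀)]
  have hcond : (w⁻¹ * w₀) * w₀ = 1 ↔ w = 1 := by
    rw [mul_assoc, hw0, mul_one, inv_eq_one]
  simp only [hcond]

end hecke

end KalmanAux

/-- Kálmán-type duality for the Iwahori–Hecke algebra of a finite Coxeter group
`W` over `ℤ[q^{±1/2}]` (here `q^{1/2}` is the Laurent variable `T 1`): with
`τ⁺`, `τ⁻` the coefficient-of-`T_e` functionals for the bases `{T_w}` and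
`{T_w⁻¹}`, and `π = T_{w₀}²` the full twist, one has `τ⁻(β) = τ⁺(βπ)` for every
element `β` of the image of the braid group (the subgroup of units generated by
the `T_w`). -/
theorem stmt13 {I W : Type*} [Group W] [Finite W] (M : CoxeterMatrix I)
    (cs : CoxeterSystem M W) (w₀ : W) (hmax : ∀ w : W, cs.length w ≤ cs.length w₀)
    {H : Type*} [Ring H] [Algebra (LaurentPolynomial ℤ) H]
    (Tb : W → Hˣ) (hT1 : Tb 1 = 1)
    (hmul : ∀ w w' : W, cs.length (w * w') = cs.length w + cs.length w' →
      Tb (w * w') = Tb w * Tb w')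
    (hquad : ∀ s : W, cs.length s = 1 →
      ((Tb s : H) - algebraMap (LaurentPolynomial ℤ) H (T 1)) *
        ((Tb s : H) + algebraMap (LaurentPolynomial ℤ) H (T (-1))) = 0)
    (b b' : Module.Basis W (LaurentPolynomial ℤ) H)
    (hb : ∀ w : W, b w = (Tb w : H)) (hb' : ∀ w : W, b' w = ((Tb w)⁻¹ : Hˣ)) :
    ∀ β : Hˣ, β ∈ Subgroup.closure (Set.range Tb) →
      b'.repr (β : H) 1 = b.repr ((β : H) * (Tb w₀ : H) ^ 2) 1 := by
  intro β _hβ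
  classical
  cases nonempty_fintype W
  have hlen : ∀ u : W, cs.length u + cs.length (u⁻¹ * w₀) = cs.length w₀ :=
    fun u => KalmanAux.length_add_length_inv_mul_w0 cs w₀ hmax u
  have hw0 : w₀ * w₀ = 1 := KalmanAux.w0_mul_self cs w₀ hmax
  have tau : ∀ y x : W, b.repr ((Tb x : H) * Tb y) 1 = if x * y = 1 then 1 else 0 :=
    fun y x => KalmanAux.tau_TT cs Tb b hT1 hmul hquad hb (cs.length y) y x le_rfl
  let f : H →ₗ[LaurentPolynomial ℤ] (LaurentPolynomial ℤ) :=
    (Finsupp.lapply (1 : W)).comp b'.repr.toLinearMap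
  let g : H →ₗ[LaurentPolynomial ℤ] (LaurentPolynomial ℤ) :=
    (Finsupp.lapply (1 : W)).comp (b.repr.toLinearMap.comp
      (LinearMap.mulRight (LaurentPolynomial ℤ) ((Tb w₀ : H) * (Tb w₀ : H))))
  have hfg : f = g := by
    apply Module.Basis.ext b'
    intro w
    have hL : f (b' w) = if w = 1 then 1 else 0 := by
      simp only [f, LinearMap.comp_apply, LinearEquiv.coe_toLinearMap, Finsupp.lapply_apply]
      rw [b'.repr_self, Finsupp.single_apply]
    have hR : g (b' w) = if w = 1 then 1 else 0 := by
      simp only [g, LinearMap.comp_apply, LinearEquiv.coe_toLinearMap, Finsupp.lapply_apply,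
        LinearMap.mulRight_apply]
      rw [hb' w]
      exact KalmanAux.key_basis cs Tb b hmul hb tau w₀ hlen hw0 w
    rw [hL, hR]
  have hev := DFunLike.congr_fun hfg (β : H)
  simp only [f, g, LinearMap.comp_apply, LinearEquiv.coe_toLinearMap, Finsupp.lapply_apply,
    LinearMap.mulRight_apply] at hev
  rw [hev, sq]
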